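/- arXiv:1906.04897 — 6 statements merged into one kernel-verified Lean document; each statement's English description precedes it below -/
import Mathlib

section
/- Every fully normalized binary string s of length n ≥ 5 admits a 3-pblockInterchange: in particular, the prefix block-interchange β(1,1,4,4), which exchanges the first symbol s[1] with the fourth symbol s[4], followed by normalization, produces a normalized binary string of length n − 3. -/
open List

/-- Normalization of a string: repeatedly merge adjacent equal symbols into one
symbol until no two adjacent symbols are equal. -/
def normalizeStr {α : Type*} [DecidableEq α] (l : List α) : List α :=
  l.destutter (· ≠ ·)

/-- A string is grouped if all occurrences of each symbol are consecutive,
i.e. after merging adjacent equal symbols every symbol occurs at most once. -/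
def Grouped {α : Type*} [DecidableEq α] (l : List α) : Prop :=
  (normalizeStr l).Nodup

/-- The prefix block-interchange β(1,x,y,z) (1-based indices, 1 ≤ x < y ≤ z ≤ n),
before normalization: s[y]…s[z] s[x+1]…s[y−1] s[1]…s[x] s[z+1]…s[n]. -/
def pbiRaw {α : Type*} (l : List α) (x y z : ℕ) : List α :=
  (l.drop (y - 1)).take (z - y + 1) ++ (l.drop x).take (y - 1 - x) ++
    l.take x ++ l.drop z

/-- Prefix block-interchange β(1,x,y,z) followed by normalization. -/
def pbi {α : Type*} [DecidableEq α] (l : List α) (x y z : ℕ) : List α :=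
  normalizeStr (pbiRaw l x y z)

/-- One prefix block-interchange operation transforming `s` into `t`. -/
def PbiStep {α : Type*} [DecidableEq α] (s t : List α) : Prop :=
  ∃ x y z, 1 ≤ x ∧ x < y ∧ y ≤ z ∧ z ≤ s.length ∧ t = pbi s x y z

/-- A restricted prefix block-interchange (2 ≤ x < y ≤ z ≤ n) keeps the first
symbol fixed, before normalization:
s[1] s[y]…s[z] s[x+1]…s[y−1] s[2]…s[x] s[z+1]…s[n]. -/
def rpbiRaw {α : Type*} (l : List α) (x y z : ℕ) : List α :=
  l.take 1 ++ (l.drop (y - 1)).take (z - y + 1) ++ (l.drop x).take (y - 1 - x) ++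
    (l.drop 1).take (x - 1) ++ l.drop z

/-- Restricted prefix block-interchange followed by normalization. -/
def rpbi {α : Type*} [DecidableEq α] (l : List α) (x y z : ℕ) : List α :=
  normalizeStr (rpbiRaw l x y z)

/-- One restricted prefix block-interchange operation transforming `s` into `t`. -/
def RpbiStep {α : Type*} [DecidableEq α] (s t : List α) : Prop :=
  ∃ x y z, 2 ≤ x ∧ x < y ∧ y ≤ z ∧ z ≤ s.length ∧ t = rpbi s x y z

/-- `StepsTo R k s t` : `t` is obtained from `s` by exactly `k` `R`-operations. -/
def StepsTo {α : Type*} (R : List α → List α → Prop) : ℕ → List α → List α → Prop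
  | 0, s, t => s = t
  | k + 1, s, t => ∃ u, R s u ∧ StepsTo R k u t

/-- Every fully normalized binary string s of length n ≥ 5 admits a
3-pblockInterchange: in particular β(1,1,4,4), exchanging s[1] with s[4],
followed by normalization, produces a normalized binary string of length n − 3. -/
theorem stmt_2 (s : List (Fin 2)) (hnorm : s.Chain' (· ≠ ·)) (hn : 5 ≤ s.length) :
    (pbi s 1 4 4).length = s.length - 3 ∧ (pbi s 1 4 4).Chain' (· ≠ ·) := by
  have key : ∀ x y z : Fin 2, x ≠ y → y ≠ z → x = z := by decide
  rcases s with _ | ⟨a, s⟩; · simp at hn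
  rcases s with _ | ⟨b, s⟩; · simp at hn
  rcases s with _ | ⟨c, s⟩; · simp at hn
  rcases s with _ | ⟨d, s⟩; · simp at hn
  rcases s with _ | ⟨e, t⟩; · simp at hn
  obtain ⟨hab, hbc, hcd, hde, ht⟩ : a ≠ b ∧ b ≠ c ∧ c ≠ d ∧ d ≠ e ∧ (e::t).IsChain (· ≠ ·) := by
    simpa [List.Chain', List.isChain_cons_cons] using hnorm
  obtain rfl : a = c := key a b c hab hbc
  obtain rfl : b = d := key b a d hbc hcd
  obtain rfl : a = e := key a b e hab hde
  have hraw : pbiRaw (a::b::a::b::a::t) 1 4 4 = b::b::a::a::a::t := by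
    simp [pbiRaw]
  have hchain : (a::t).IsChain (· ≠ ·) := ht
  have : pbi (a::b::a::b::a::t) 1 4 4 = b::a::t := by
    rw [pbi, hraw, normalizeStr, destutter_cons_cons, if_neg (by simp),
      destutter'_cons_pos _ (Ne.symm hab),
      destutter'_cons_neg _ (by simp), destutter'_cons_neg _ (by simp),
      destutter'_of_isChain_cons _ _ hchain]
  rw [this]
  refine ⟨by simp, ?_⟩
  exact List.isChain_cons_cons.mpr ⟨Ne.symm hab, ht⟩
end

section
/- Let s be a fully normalized binary string of length n ≥ 5. Then the grouping distance of s under prefix block-interchanges satisfies d^g_pbi(s) = ⌈(n−2)/3⌉. -/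
open List

section Aux

variable {α : Type*} [DecidableEq α]

lemma destutter_le_destutter' (m : List α) (a : α) :
    (m.destutter (Ne (α := α))).length ≤ (m.destutter' Ne a).length := by
  cases m with
  | nil => simp [destutter_nil, destutter'_nil]
  | cons b m' =>
    rw [destutter_cons']
    by_cases h : a ≠ b
    · rw [destutter'_cons_pos _ h]; simp
    · push_neg at h; subst h
      rw [destutter'_cons_neg _ (by simp)]

lemma destutter'_append_len : ∀ (l m : List α) (a : α),
    (l.destutter' Ne a).length + (m.destutter Ne).length ≤
      ((l ++ m).destutter' Ne a).length + 1
  | [], m, a => by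
    have := destutter_le_destutter' m a
    simp only [nil_append, destutter'_nil, length_cons, length_nil]
    omega
  | c :: l', m, a => by
    by_cases h : a ≠ c
    · rw [destutter'_cons_pos _ h, cons_append, destutter'_cons_pos _ h]
      have := destutter'_append_len l' m c
      simp only [length_cons]
      omega
    · rw [destutter'_cons_neg _ h, cons_append, destutter'_cons_neg _ h]
      exact destutter'_append_len l' m a

lemma destutter_append_len (l m : List α) :
    (l.destutter (Ne (α := α))).length + (m.destutter Ne).length ≤
      ((l ++ m).destutter Ne).length + 1 := by
  cases l with
  | nil => simp
  | cons a l' =>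
    rw [destutter_cons', cons_append, destutter_cons']
    exact destutter'_append_len l' m a

lemma normalizeStr_eq_destutter_ne (l : List α) :
    normalizeStr l = l.destutter Ne := rfl

set_option linter.unusedSectionVars false in
lemma take_drop_infix (l : List α) (i j : ℕ) : (l.drop i).take j <:+: l :=
  ((l.drop i).take_prefix j).isInfix.trans (l.drop_suffix i).isInfix

lemma pbi_len {x y z : ℕ} (s : List α) (hs : s.Chain' (· ≠ ·))
    (h1 : 1 ≤ x) (hxy : x < y) (hyz : y ≤ z) (hz : z ≤ s.length) :
    s.length ≤ (pbi s x y z).length + 3 := by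
  set A := (s.drop (y - 1)).take (z - y + 1) with hA
  set B := (s.drop x).take (y - 1 - x) with hB
  set C := s.take x with hC
  set D := s.drop z with hD
  have hcA : A.Chain' Ne := hs.infix (take_drop_infix s _ _)
  have hcB : B.Chain' Ne := hs.infix (take_drop_infix s _ _)
  have hcC : C.Chain' Ne := hs.prefix (s.take_prefix x)
  have hcD : D.Chain' Ne := hs.suffix (s.drop_suffix z)
  have lA : A.length = z - y + 1 := by
    rw [hA, length_take, length_drop]; omega
  have lB : B.length = y - 1 - x := by
    rw [hB, length_take, length_drop]; omega
  have lC : C.length = x := by rw [hC, length_take]; omega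
  have lD : D.length = s.length - z := by rw [hD, length_drop]
  have e1 := destutter_append_len A (B ++ C ++ D)
  have e2 := destutter_append_len B (C ++ D)
  have e3 := destutter_append_len C D
  rw [destutter_of_isChain _ _ hcA, destutter_of_isChain _ _ hcB,
    destutter_of_isChain _ _ hcC, destutter_of_isChain _ _ hcD] at *
  have hraw : pbiRaw s x y z = A ++ (B ++ C ++ D) := by
    simp [pbiRaw, hA, hB, hC, hD, append_assoc]
  have : (pbi s x y z).length = ((A ++ (B ++ C ++ D)).destutter Ne).length := by
    rw [pbi, normalizeStr_eq_destutter_ne, hraw]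
  rw [append_assoc B C D] at e1 this
  omega

lemma pbi_chain' (s : List α) (x y z : ℕ) : (pbi s x y z).Chain' (· ≠ ·) :=
  isChain_destutter _ _

end Aux

section Fin2

lemma fin2_ne_add_one : ∀ a : Fin 2, a ≠ a + 1 := by decide
lemma fin2_eq_add_one {a b : Fin 2} (h : a ≠ b) : b = a + 1 := by revert a b; decide
lemma fin2_add_add : ∀ a : Fin 2, a + 1 + 1 = a := by decide

def altL : Fin 2 → ℕ → List (Fin 2)
  | _, 0 => []
  | a, n + 1 => a :: altL (a + 1) n

@[simp] lemma altL_length : ∀ (n : ℕ) (a : Fin 2), (altL a n).length = n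
  | 0, _ => rfl
  | n + 1, a => by simp [altL, altL_length n]

lemma altL_chain' : ∀ (n : ℕ) (a : Fin 2), (altL a n).Chain' (· ≠ ·)
  | 0, _ => List.isChain_nil
  | 1, a => List.isChain_singleton a
  | n + 2, a => by
    rw [show altL a (n + 2) = a :: altL (a + 1) (n + 1) from rfl]
    refine List.isChain_cons_cons.mpr ⟨fin2_ne_add_one a, altL_chain' (n + 1) (a + 1)⟩

lemma chain'_eq_altL : ∀ (s : List (Fin 2)), s.Chain' (· ≠ ·) → ∃ a, s = altL a s.length := by
  intro s
  induction s with
  | nil => intro _; exact ⟨0, rfl⟩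
  | cons x l IH =>
    intro h
    obtain ⟨b, hb⟩ := IH h.tail
    cases l with
    | nil => exact ⟨x, rfl⟩
    | cons y l' =>
      have hxy : x ≠ y := (List.isChain_cons_cons.mp h).1
      have h2 : y :: l' = b :: altL (b + 1) l'.length := hb
      injection h2 with hyb hl'
      refine ⟨x, ?_⟩
      subst hyb
      have hbx : y = x + 1 := fin2_eq_add_one hxy
      subst hbx
      show x :: (x + 1) :: l' = x :: (x + 1) :: altL (x + 1 + 1) l'.length
      rw [← hl']

lemma chain_altL (a : Fin 2) (n : ℕ) : List.Chain (· ≠ ·) a (altL (a + 1) n) :=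
  altL_chain' (n + 1) a

end Fin2

section Steps

lemma stepA (a : Fin 2) (n : ℕ) (h : 5 ≤ n) :
    PbiStep (altL a n) (altL (a + 1) (n - 3)) := by
  obtain ⟨m, rfl⟩ : ∃ m, n = m + 5 := ⟨n - 5, by omega⟩
  refine ⟨1, 4, 4, by omega, by omega, by omega, by simp, ?_⟩
  set b := a + 1 with hb
  have hs : altL a (m + 5) = a :: b :: a :: b :: a :: altL b m := by
    show a :: altL (a+1) (m+4) = _
    rw [show altL (a+1) (m+4) = (a+1) :: altL (a+1+1) (m+3) from rfl, fin2_add_add]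
    rw [show altL a (m+3) = a :: altL (a+1) (m+2) from rfl]
    rw [show altL (a+1) (m+2) = (a+1) :: altL (a+1+1) (m+1) from rfl, fin2_add_add]
    rw [show altL a (m+1) = a :: altL (a+1) m from rfl]
  have hraw : pbiRaw (altL a (m + 5)) 1 4 4 = b :: b :: a :: a :: a :: altL b m := by
    rw [hs]; rfl
  have hab : a ≠ b := fin2_ne_add_one a
  rw [pbi, hraw, normalizeStr]
  rw [destutter_cons', destutter'_cons_neg _ (by simp), destutter'_cons_pos _ (Ne.symm hab),
    destutter'_cons_neg _ (by simp), destutter'_cons_neg _ (by simp),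
    destutter'_of_isChain_cons _ _ (chain_altL a m)]
  rw [show m + 5 - 3 = m + 2 from by omega]
  show altL b (m + 2) = b :: a :: altL b m
  rw [show altL b (m + 2) = b :: altL (b+1) (m+1) from rfl, hb, fin2_add_add,
    show altL a (m+1) = a :: altL (a+1) m from rfl]

lemma stepB (a : Fin 2) : PbiStep (altL a 4) (altL (a + 1) 2) := by
  refine ⟨1, 4, 4, by omega, by omega, by omega, by simp, ?_⟩
  revert a; decide

lemma stepC (a : Fin 2) : PbiStep (altL a 3) (altL (a + 1) 2) := by
  refine ⟨1, 2, 3, by omega, by omega, by omega, by simp, ?_⟩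
  revert a; decide

lemma grouped_altL2 (a : Fin 2) : Grouped (altL a 2) := by
  unfold Grouped normalizeStr; revert a; decide

lemma fin2_trans : ∀ a b c : Fin 2, a ≠ b → b ≠ c → a = c := by decide

lemma upper (n : ℕ) : ∀ a : Fin 2, 2 ≤ n →
    ∃ t, StepsTo PbiStep (n / 3) (altL a n) t ∧ Grouped t := by
  induction n using Nat.strong_induction_on with
  | _ n IH =>
    intro a hn
    by_cases h5 : 5 ≤ n
    · obtain ⟨t, ht, hg⟩ := IH (n - 3) (by omega) (a + 1) (by omega)
      refine ⟨t, ?_, hg⟩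
      rw [show n / 3 = (n - 3) / 3 + 1 by omega]
      exact ⟨_, stepA a n h5, ht⟩
    · interval_cases n
      · exact ⟨altL a 2, rfl, grouped_altL2 a⟩
      · exact ⟨altL (a + 1) 2, ⟨_, stepC a, rfl⟩, grouped_altL2 (a + 1)⟩
      · exact ⟨altL (a + 1) 2, ⟨_, stepB a, rfl⟩, grouped_altL2 (a + 1)⟩

lemma lower : ∀ (k : ℕ) (s t : List (Fin 2)), s.Chain' (· ≠ ·) →
    StepsTo PbiStep k s t → t.Chain' (· ≠ ·) ∧ s.length ≤ t.length + 3 * k := by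
  intro k
  induction k with
  | zero =>
    intro s t hs h
    have : s = t := h
    subst this
    exact ⟨hs, by omega⟩
  | succ k IH =>
    rintro s t hs ⟨u, ⟨x, y, z, h1, hxy, hyz, hz, rfl⟩, hrest⟩
    obtain ⟨hct, hlen⟩ := IH _ t (pbi_chain' s x y z) hrest
    exact ⟨hct, by have := pbi_len s hs h1 hxy hyz hz; omega⟩

lemma grouped_len (t : List (Fin 2)) (h : t.Chain' (· ≠ ·)) (hg : Grouped t) :
    t.length ≤ 2 := by
  rw [Grouped, normalizeStr, destutter_of_isChain _ _ h] at hg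
  match t with
  | [] => simp
  | [a] => simp
  | [a, b] => simp
  | a :: b :: c :: r =>
    exfalso
    have hab : a ≠ b := (List.isChain_cons_cons.mp h).1
    have hbc : b ≠ c := (List.isChain_cons_cons.mp (List.isChain_cons_cons.mp h).2).1
    have hac : a = c := fin2_trans a b c hab hbc
    have : a ∉ b :: c :: r := (List.nodup_cons.mp hg).1
    exact this (hac ▸ List.mem_cons_of_mem _ List.mem_cons_self)

end Steps

/-- For a fully normalized binary string s of length n ≥ 5, the
grouping distance under prefix block-interchanges equals ⌈(n−2)/3⌉. -/
theorem stmt_3 (s : List (Fin 2)) (hnorm : s.Chain' (· ≠ ·)) (hn : 5 ≤ s.length) :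
    IsLeast {k | ∃ t, StepsTo PbiStep k s t ∧ Grouped t}
      ((s.length - 2 + 2) / 3) := by
  obtain ⟨a, ha⟩ := chain'_eq_altL s hnorm
  constructor
  · rw [show (s.length - 2 + 2) / 3 = s.length / 3 by omega]
    obtain ⟨t, ht, hg⟩ := upper s.length a (by omega)
    rw [ha] at ht ⊢
    exact ⟨t, by simpa using ht, hg⟩
  · rintro k ⟨t, ht, hg⟩
    obtain ⟨hct, hlen⟩ := lower k s t hnorm ht
    have := grouped_len t hct hg
    show (s.length - 2 + 2) / 3 ≤ k
    omega
end

section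
/- Let s be a fully normalized binary string of length n ≥ 2. Then the sorting distance of s under prefix block-interchanges satisfies d^s_pbi(s) ≤ ⌈(n−2)/3⌉ + 1; moreover, if grouping s produces the string 01 then d^s_pbi(s) = d^g_pbi(s) ≤ ⌈(n−2)/3⌉. -/
open List

def alt : ℕ → Fin 2 → List (Fin 2)
  | 0, _ => []
  | n+1, a => a :: alt n (1 - a)

lemma fin2_sub_sub (a : Fin 2) : 1 - (1 - a) = a := by fin_cases a <;> rfl

lemma alt_two (n : ℕ) (a : Fin 2) : alt (n+2) a = a :: (1-a) :: alt n a := by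
  show a :: (1-a) :: alt n (1-(1-a)) = _
  rw [fin2_sub_sub]

lemma alt_length : ∀ (n : ℕ) (a : Fin 2), (alt n a).length = n
  | 0, _ => rfl
  | n+1, a => by simp [alt, alt_length n]

lemma alt_chain' : ∀ (n : ℕ) (a : Fin 2), (alt n a).Chain' (· ≠ ·)
  | 0, _ => isChain_nil
  | 1, _ => isChain_singleton _
  | n+2, a => by
      rw [alt_two]
      refine List.isChain_cons_cons.2 ⟨?_, ?_⟩
      · revert a; decide
      · have h := alt_chain' (n+1) (1-a)
        rw [show alt (n+1) (1-a) = (1-a) :: alt n (1-(1-a)) from rfl, fin2_sub_sub] at h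
        exact h

lemma eq_alt : ∀ (s : List (Fin 2)), s.Chain' (· ≠ ·) → ∃ a, s = alt s.length a
  | [], _ => ⟨0, rfl⟩
  | [a], _ => ⟨a, rfl⟩
  | a :: b :: l, h => by
      obtain ⟨hab, h'⟩ := List.isChain_cons_cons.1 h
      obtain ⟨c, hc⟩ := eq_alt (b :: l) h'
      have hcb : c = b := by
        have h2 := congrArg List.head? hc
        simp only [length_cons, alt, head?_cons] at h2
        exact (Option.some_inj.1 h2).symm
      have hba : b = 1 - a := by
        have key : ∀ x y : Fin 2, x ≠ y → y = 1 - x := by decide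
        exact key a b hab
      refine ⟨a, ?_⟩
      show a :: b :: l = a :: alt (l.length + 1) (1 - a)
      rw [hcb] at hc
      rw [← hba]
      exact congrArg (a :: ·) (by simpa using hc)

lemma destutter'_alt (a : Fin 2) (m : ℕ) :
    destutter' (· ≠ ·) a (alt m (1 - a)) = a :: alt m (1 - a) := by
  apply destutter'_of_isChain_cons
  exact alt_chain' (m+1) a

lemma alt_six (a : Fin 2) (m : ℕ) :
    alt (m+6) a = a :: (1-a) :: a :: (1-a) :: a :: (1-a) :: alt m a := by
  rw [show m+6 = (m+2)+2+2 by ring, alt_two, alt_two, alt_two]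

lemma reduce (a : Fin 2) (m : ℕ) :
    pbi (alt (m+6) a) 2 4 5 = alt (m+3) (1-a) := by
  have hne : a ≠ 1 - a := by revert a; decide
  have hne' : (1 : Fin 2) - a ≠ a := fun h => hne h.symm
  rw [alt_six]
  have hR : pbiRaw (a :: (1-a) :: a :: (1-a) :: a :: (1-a) :: alt m a) 2 4 5
      = (1-a) :: a :: a :: a :: (1-a) :: (1-a) :: alt m a := by
    simp [pbiRaw]
  rw [pbi, hR]
  have hrhs : alt (m+3) (1-a) = (1-a) :: a :: (1-a) :: alt m a := by
    rw [show m+3 = (m+1)+2 by ring, alt_two, fin2_sub_sub]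
    show (1-a) :: a :: ((1-a) :: alt m (1-(1-a))) = _
    rw [fin2_sub_sub]
  rw [hrhs, normalizeStr]
  simp only [destutter_cons', destutter'_cons, if_pos, if_neg, hne, hne', ne_eq,
    not_true_eq_false, not_false_eq_true, if_true, if_false, ite_true, ite_false,
    not_not]
  rw [show alt m a = alt m (1-(1-a)) from by rw [fin2_sub_sub], destutter'_alt]

lemma steps_snoc {R : List (Fin 2) → List (Fin 2) → Prop} :
    ∀ {m : ℕ} {s t u : List (Fin 2)}, StepsTo R m s t → R t u → StepsTo R (m+1) s u
  | 0, s, t, u, h, h2 => ⟨u, h ▸ h2, rfl⟩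
  | m+1, s, t, u, ⟨v, hv, hvt⟩, h2 => ⟨v, hv, steps_snoc hvt h2⟩

lemma grouped_of_sorted (t : List (Fin 2)) (h : t.Pairwise (· ≤ ·)) : Grouped t := by
  have hsub := t.destutter_sublist (· ≠ ·)
  have hchain := t.isChain_destutter (· ≠ ·)
  have hsorted : (t.destutter (· ≠ ·)).Pairwise (· ≤ ·) := h.sublist hsub
  have hle : (t.destutter (· ≠ ·)).IsChain (· ≤ ·) := List.isChain_iff_pairwise.2 hsorted
  have hlt : (t.destutter (· ≠ ·)).IsChain (· < ·) := by
    rw [List.isChain_iff_getElem] at hle hchain ⊢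
    intro i hi
    exact lt_of_le_of_ne (hle i hi) (hchain i hi)
  rw [Grouped, normalizeStr]
  exact (List.isChain_iff_pairwise.1 hlt).imp ne_of_lt

lemma group_alt : ∀ (n : ℕ), ∀ (a : Fin 2), 2 ≤ n →
    ∃ m t, m ≤ n / 3 ∧ StepsTo PbiStep m (alt n a) t ∧
      (t = [0,1] ∨ t = [1,0]) := by
  intro n
  induction n using Nat.strong_induction_on with
  | _ n ih =>
    intro a hn
    by_cases h6 : 6 ≤ n
    · obtain ⟨m, rfl⟩ : ∃ m, n = m + 6 := ⟨n - 6, by omega⟩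
      obtain ⟨k, t, hk, hst, ht⟩ := ih (m+3) (by omega) (1-a) (by omega)
      refine ⟨k+1, t, by omega, ⟨alt (m+3) (1-a), ?_, hst⟩, ht⟩
      exact ⟨2, 4, 5, by omega, by omega, by omega, by rw [alt_length]; omega,
        (reduce a m).symm⟩
    · interval_cases n
      · exact ⟨0, alt 2 a, by omega, rfl, by fin_cases a <;> simp [alt] <;> decide⟩
      · exact ⟨1, pbi (alt 3 a) 1 2 3, by omega,
          ⟨_, ⟨1, 2, 3, le_refl _, by omega, by omega, by rw [alt_length], rfl⟩, rfl⟩,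
          by fin_cases a <;> decide⟩
      · exact ⟨1, pbi (alt 4 a) 1 4 4, by omega,
          ⟨_, ⟨1, 4, 4, le_refl _, by omega, by omega, by rw [alt_length], rfl⟩, rfl⟩,
          by fin_cases a <;> decide⟩
      · exact ⟨1, pbi (alt 5 a) 1 4 4, by omega,
          ⟨_, ⟨1, 4, 4, le_refl _, by omega, by omega, by rw [alt_length]; omega, rfl⟩, rfl⟩,
          by fin_cases a <;> decide⟩

/-- For a fully normalized binary string s of length n ≥ 2, the
sorting distance under prefix block-interchanges is at most ⌈(n−2)/3⌉ + 1;
moreover, if (an optimal) grouping of s produces the string 01 then the sorting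
distance equals the grouping distance, which is at most ⌈(n−2)/3⌉. -/
theorem stmt_4 (s : List (Fin 2)) (hnorm : s.Chain' (· ≠ ·)) (hn : 2 ≤ s.length) :
    (∃ k, k ≤ (s.length - 2 + 2) / 3 + 1 ∧
      ∃ t, StepsTo PbiStep k s t ∧ t.Pairwise (· ≤ ·)) ∧
    (∀ k, IsLeast {k | ∃ t, StepsTo PbiStep k s t ∧ Grouped t} k →
      (∃ t, StepsTo PbiStep k s t ∧ Grouped t ∧ t = [0, 1]) →
      IsLeast {k | ∃ t, StepsTo PbiStep k s t ∧ t.Pairwise (· ≤ ·)} k ∧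
        k ≤ (s.length - 2 + 2) / 3) := by
  obtain ⟨a, ha⟩ := eq_alt s hnorm
  obtain ⟨m, t, hm, hst, hor⟩ := group_alt s.length a hn
  rw [← ha] at hst
  constructor
  · rcases hor with h01 | h10
    · exact ⟨m, by omega, t, hst, by rw [h01]; decide⟩
    · refine ⟨m+1, by omega, [0,1], steps_snoc hst ?_, by decide⟩
      rw [h10]
      exact ⟨1, 2, 2, le_refl _, by omega, le_refl _, by simp, by decide⟩
  · intro k hk h01
    obtain ⟨t0, ht0, hg0, rfl⟩ := h01
    refine ⟨⟨⟨[0,1], ht0, by decide⟩, ?_⟩, ?_⟩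
    · intro k' hk'
      obtain ⟨t', ht', hs'⟩ := hk'
      exact hk.2 ⟨t', ht', grouped_of_sorted t' hs'⟩
    · have hkm : k ≤ m := hk.2 ⟨t, hst, by rcases hor with h|h <;> rw [h] <;> unfold Grouped normalizeStr <;> decide⟩
      omega
end

section
/- Every fully normalized ternary string of length n > 3 admits a prefix block-interchange whose normalized result is strictly shorter than n (i.e., one can always perform at least a 1-pblockInterchange). Concretely, for some prefix s[1]…s[l] and some block s[i]…s[j] with 1 ≤ l < i ≤ j < n, at least one of s[1] = s[i−1], s[j] = s[l+1], or s[l] = s[j+1] holds, and the corresponding prefix block-interchange reduces the normalized length by at least 1. -/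
open List

lemma destutter'_dup {α : Type*} [DecidableEq α] (y : α) (t : List α)
    (hc : List.Chain (· ≠ ·) y t) : List.destutter' (· ≠ ·) y (y::t) = y :: t := by
  rw [List.destutter'_cons, if_neg (by simp), List.destutter'_of_isChain_cons (R := (· ≠ ·)) (a := y) (l := t) hc]

/-- Every fully normalized ternary string of length n > 3 admits a
prefix block-interchange whose normalized result is strictly shorter than n:
for some prefix s[1]…s[l] and block s[i]…s[j] with 1 ≤ l < i ≤ j < n, at least
one of s[1] = s[i−1], s[j] = s[l+1], s[l] = s[j+1] holds (1-based), and the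
corresponding prefix block-interchange β(1,l,i,j) reduces the normalized length
by at least 1. -/
theorem stmt_9 (s : List (Fin 3)) (hnorm : s.Chain' (· ≠ ·))
    (h0 : 0 ∈ s) (h1 : 1 ∈ s) (h2 : 2 ∈ s) (hn : 3 < s.length) :
    ∃ l i j, 1 ≤ l ∧ l < i ∧ i ≤ j ∧ j < s.length ∧
      (s.getD 0 0 = s.getD (i - 2) 0 ∨ s.getD (j - 1) 0 = s.getD l 0 ∨
        s.getD (l - 1) 0 = s.getD j 0) ∧
      (pbi s l i j).length < s.length := by
  rcases s with _ | ⟨a, _ | ⟨b, _ | ⟨c, _ | ⟨d, t⟩⟩⟩⟩ <;> simp at hn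
  obtain ⟨hab, hbc, hcd, hct⟩ : a ≠ b ∧ b ≠ c ∧ c ≠ d ∧ List.Chain (· ≠ ·) d t := by
    simpa [List.isChain_cons_cons, List.Chain', List.Chain] using hnorm
  by_cases hca : c = a
  · refine ⟨1, 2, 2, le_refl _, by norm_num, le_refl _, by simp, Or.inl rfl, ?_⟩
    have hraw : pbiRaw (a::b::c::d::t) 1 2 2 = b::a::c::d::t := by simp [pbiRaw]
    subst hca
    rw [pbi, hraw, normalizeStr, List.destutter_cons',
      List.destutter'_cons_pos _ (Ne.symm hab),
      destutter'_dup _ _ (List.Chain.cons hcd hct)]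
    simp
  · by_cases hdb : d = b
    · refine ⟨2, 3, 3, by norm_num, by norm_num, le_refl _, by simp, Or.inr (Or.inr ?_), ?_⟩
      · simpa using hdb.symm
      have hraw : pbiRaw (a::b::c::d::t) 2 3 3 = c::a::b::d::t := by simp [pbiRaw]
      subst hdb
      rw [pbi, hraw, normalizeStr, List.destutter_cons',
        List.destutter'_cons_pos _ hca,
        List.destutter'_cons_pos _ hab,
        destutter'_dup _ _ hct]
      simp
    · have hda : d = a := by
        have h : ∀ a b c d : Fin 3, a ≠ b → b ≠ c → ¬ c = a → c ≠ d → ¬ d = b → d = a := by decide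
        exact h a b c d hab hbc hca hcd hdb
      refine ⟨1, 2, 3, le_refl _, by norm_num, by norm_num, by simp, Or.inr (Or.inr ?_), ?_⟩
      · simpa using hda.symm
      have hraw : pbiRaw (a::b::c::d::t) 1 2 3 = b::c::a::d::t := by simp [pbiRaw]
      subst hda
      rw [pbi, hraw, normalizeStr, List.destutter_cons',
        List.destutter'_cons_pos _ hbc,
        List.destutter'_cons_pos _ hca,
        destutter'_dup _ _ hct]
      simp
end

section
/- Each of the length-3 ternary strings 210, 102, 120 and 201 can be transformed into the sorted string 012 by a single prefix block-interchange, while 021 can be transformed into 012 by two prefix block-interchanges; consequently, every grouped fully normalized ternary string can be sorted using at most two additional prefix block-interchanges. -/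
open List

lemma pbi_wit {s t : List (Fin 3)} (x y z : ℕ) (h1 : 1 ≤ x) (h2 : x < y)
    (h3 : y ≤ z) (h4 : z ≤ s.length) (h5 : t = pbi s x y z) : PbiStep s t :=
  ⟨x, y, z, h1, h2, h3, h4, h5⟩

lemma h210 : PbiStep ([2, 1, 0] : List (Fin 3)) [0, 1, 2] :=
  pbi_wit 1 3 3 (by norm_num) (by norm_num) le_rfl (by simp) (by decide)

lemma h102 : PbiStep ([1, 0, 2] : List (Fin 3)) [0, 1, 2] :=
  pbi_wit 1 2 2 (by norm_num) (by norm_num) le_rfl (by simp) (by decide)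

lemma h120 : PbiStep ([1, 2, 0] : List (Fin 3)) [0, 1, 2] :=
  pbi_wit 2 3 3 (by norm_num) (by norm_num) le_rfl (by simp) (by decide)

lemma h201 : PbiStep ([2, 0, 1] : List (Fin 3)) [0, 1, 2] :=
  pbi_wit 1 2 3 (by norm_num) (by norm_num) (by norm_num) (by simp) (by decide)

lemma h021 : StepsTo PbiStep 2 ([0, 2, 1] : List (Fin 3)) [0, 1, 2] :=
  ⟨[2, 0, 1], pbi_wit 1 2 2 (by norm_num) (by norm_num) le_rfl (by simp) (by decide),
    [0, 1, 2], h201, rfl⟩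

/-- Each of 210, 102, 120 and 201 can be transformed into the
sorted string 012 by a single prefix block-interchange, while 021 can be
transformed into 012 by two prefix block-interchanges; consequently, every
grouped fully normalized ternary string can be sorted using at most two
additional prefix block-interchanges. -/
theorem stmt_16 :
    PbiStep ([2, 1, 0] : List (Fin 3)) [0, 1, 2] ∧
    PbiStep ([1, 0, 2] : List (Fin 3)) [0, 1, 2] ∧
    PbiStep ([1, 2, 0] : List (Fin 3)) [0, 1, 2] ∧
    PbiStep ([2, 0, 1] : List (Fin 3)) [0, 1, 2] ∧
    StepsTo PbiStep 2 ([0, 2, 1] : List (Fin 3)) [0, 1, 2] ∧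
    (∀ s : List (Fin 3), s.Chain' (· ≠ ·) → 0 ∈ s → 1 ∈ s → 2 ∈ s →
      Grouped s → ∃ k, k ≤ 2 ∧ StepsTo PbiStep k s [0, 1, 2]) := by
  refine ⟨h210, h102, h120, h201, h021, ?_⟩
  intro s hc h0 h1 h2 hg
  have hnd : s.Nodup := by
    have := List.destutter_of_isChain (· ≠ ·) s hc
    unfold Grouped normalizeStr at hg
    rwa [this] at hg
  have hle : s.length ≤ 3 := by
    simpa using hnd.length_le_card
  have hsub : ([0, 1, 2] : List (Fin 3)) ⊆ s := by
    intro a ha; fin_cases ha <;> assumption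
  have hge : 3 ≤ s.length := by
    have : ([0, 1, 2] : List (Fin 3)) <+~ s :=
      List.subperm_of_subset (by decide) hsub
    simpa using this.length_le
  have hlen : s.length = 3 := le_antisymm hle hge
  match s, hlen with
  | [a, b, c], _ =>
    simp only [List.mem_cons, List.not_mem_nil, or_false] at h0 h1 h2
    fin_cases a <;> fin_cases b <;> fin_cases c <;>
      simp_all <;>
      first
      | exact ⟨0, by norm_num, rfl⟩
      | exact ⟨1, by norm_num, [0, 1, 2], h210, rfl⟩
      | exact ⟨1, by norm_num, [0, 1, 2], h102, rfl⟩
      | exact ⟨1, by norm_num, [0, 1, 2], h120, rfl⟩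
      | exact ⟨1, by norm_num, [0, 1, 2], h201, rfl⟩
      | exact ⟨2, by norm_num, h021⟩
end

section
/- Let s be a fully normalized ternary string of length n. Then the sorting distance of s under prefix block-interchanges satisfies d^s_pbi(s) ≤ ⌈(n−2)/2⌉ + 2. -/
open List

section Helpers

variable {α : Type*} [DecidableEq α]

lemma destutter'_collapse (a : α) (v : List α) :
    ∀ (u : List α) (b : α),
      List.destutter' (· ≠ ·) b (u ++ a :: a :: v) =
        List.destutter' (· ≠ ·) b (u ++ a :: v)
  | [], b => by
    by_cases h : b = a
    · subst h
      rw [List.nil_append, List.nil_append, List.destutter'_cons, if_neg (by simp)]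
    · rw [List.nil_append, List.nil_append, List.destutter'_cons, if_pos h,
        List.destutter'_cons, if_neg (by simp), List.destutter'_cons, if_pos h]
  | x :: u, b => by
    rw [List.cons_append, List.cons_append, List.destutter'_cons, List.destutter'_cons]
    split_ifs with h
    · rw [destutter'_collapse a v u x]
    · rw [destutter'_collapse a v u b]

lemma normalize_collapse (u : List α) (a : α) (v : List α) :
    normalizeStr (u ++ a :: a :: v) = normalizeStr (u ++ a :: v) := by
  cases u with
  | nil =>
    show List.destutter _ (a :: a :: v) = List.destutter _ (a :: v)
    rw [List.destutter_cons', List.destutter_cons', List.destutter'_cons, if_neg (by simp)]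
  | cons x u =>
    show List.destutter _ (x :: (u ++ a :: a :: v)) = List.destutter _ (x :: (u ++ a :: v))
    rw [List.destutter_cons', List.destutter_cons']
    exact destutter'_collapse a v u x

lemma normalize_length (l : List α) : (normalizeStr l).length ≤ l.length :=
  (List.destutter_sublist _ l).length_le

lemma normalize_chain (l : List α) : (normalizeStr l).Chain' (· ≠ ·) :=
  List.isChain_destutter _ l

lemma pbiRaw_decomp (A B C D : List α) (hC : C ≠ []) :
    pbiRaw (A ++ B ++ C ++ D) A.length (A.length + B.length + 1)
      (A.length + B.length + C.length) = C ++ B ++ A ++ D := by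
  have hC1 : 1 ≤ C.length := List.length_pos_iff.2 hC
  have h1 : A ++ B ++ C ++ D = (A ++ B) ++ (C ++ D) := by simp
  have h2 : A ++ B ++ C ++ D = A ++ (B ++ (C ++ D)) := by simp
  have t1 : (A ++ B ++ C ++ D).take A.length = A := by
    rw [h2]; exact List.take_left
  have t4 : (A ++ B ++ C ++ D).drop (A.length + B.length + C.length) = D := by
    rw [show A ++ B ++ C ++ D = (A ++ B ++ C) ++ D from rfl,
      show A.length + B.length + C.length = (A ++ B ++ C).length by
        simp only [List.length_append]]
    exact List.drop_left
  have t3 : ((A ++ B ++ C ++ D).drop (A.length + B.length + 1 - 1)).take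
      (A.length + B.length + C.length - (A.length + B.length + 1) + 1) = C := by
    rw [show A.length + B.length + 1 - 1 = (A ++ B).length by simp, h1, List.drop_left,
      show A.length + B.length + C.length - (A.length + B.length + 1) + 1 = C.length by omega]
    exact List.take_left
  have t2 : ((A ++ B ++ C ++ D).drop A.length).take
      (A.length + B.length + 1 - 1 - A.length) = B := by
    rw [h2, List.drop_left,
      show A.length + B.length + 1 - 1 - A.length = B.length by omega]
    exact List.take_left
  show _ ++ _ ++ _ ++ _ = _
  rw [t1, t2, t3, t4]

lemma PbiStep_decomp (A B C D : List α) (hA : A ≠ []) (hC : C ≠ []) :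
    PbiStep (A ++ B ++ C ++ D) (normalizeStr (C ++ B ++ A ++ D)) := by
  have hA1 : 1 ≤ A.length := List.length_pos_iff.2 hA
  have hC1 : 1 ≤ C.length := List.length_pos_iff.2 hC
  refine ⟨A.length, A.length + B.length + 1, A.length + B.length + C.length,
    hA1, by omega, by omega, ?_, ?_⟩
  · simp only [List.length_append]; omega
  · rw [pbi, pbiRaw_decomp A B C D hC]

lemma mem_first_split {a : α} : ∀ {l : List α}, a ∈ l → ∃ p q, l = p ++ a :: q ∧ a ∉ p := by
  intro l h
  induction l with
  | nil => cases h
  | cons x xs ih =>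
    by_cases hx : x = a
    · exact ⟨[], xs, by simp [hx], by simp⟩
    · have h' : a ∈ xs := by
        rcases List.mem_cons.1 h with h | h
        · exact absurd h.symm hx
        · exact h
      obtain ⟨p, q, hl, hp⟩ := ih h'
      exact ⟨x :: p, q, by simp [hl], by
        simp only [List.mem_cons, not_or]
        exact ⟨fun h'' => hx h''.symm, hp⟩⟩

end Helpers

lemma fin3_eq_b : ∀ a b x y : Fin 3, a ≠ b → x ≠ a → x ≠ b → y ≠ a → y ≠ x → y = b := by
  decide

lemma fin3_eq_x : ∀ a b x y : Fin 3, a ≠ b → x ≠ a → x ≠ b → y ≠ a → y ≠ b → y = x := by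
  decide

lemma fin3_or : ∀ p q r w : Fin 3, p ≠ q → q ≠ r → r ≠ p → r ≠ w → w = p ∨ w = q := by
  decide

/-- The bound used in the induction. -/
def bound (n : ℕ) : ℕ := if n ≤ 3 then 2 else (n - 1) / 2 + 2

lemma two_le_bound (n : ℕ) : 2 ≤ bound n := by
  unfold bound; split <;> omega

lemma bound_mono {m n : ℕ} (h : m ≤ n) : bound m ≤ bound n := by
  unfold bound; split <;> split <;> omega

lemma bound_step1 {m : ℕ} (h4 : 4 ≤ m) (h5 : m ≤ 5) : bound (m - 1) + 1 ≤ bound m := by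
  unfold bound; split <;> split <;> omega

lemma bound_step2 {m : ℕ} (h : 6 ≤ m) : bound (m - 2) + 1 ≤ bound m := by
  unfold bound; split <;> split <;> omega

/-- Base case: strings of length at most 3 can be sorted in at most 2 steps. -/
lemma base3 (s : List (Fin 3)) (hc : s.Chain' (· ≠ ·)) (h3 : s.length ≤ 3) :
    ∃ k, k ≤ 2 ∧ ∃ t, StepsTo PbiStep k s t ∧ t.Pairwise (· ≤ ·) := by
  rcases s with _ | ⟨a, _ | ⟨b, _ | ⟨c, _ | ⟨d, r⟩⟩⟩⟩
  · exact ⟨0, by omega, [], rfl, List.Pairwise.nil⟩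
  · exact ⟨0, by omega, [a], rfl, List.pairwise_singleton _ a⟩
  · -- pairs
    obtain ⟨hab, -⟩ := List.isChain_cons_cons.1 hc
    fin_cases a <;> fin_cases b <;>
      first
      | exact absurd hab (by decide)
      | exact ⟨0, by omega, _, rfl, by decide⟩
      | exact ⟨1, by omega, [0, 1],
          ⟨[0, 1], ⟨1, 2, 2, by decide, by decide, by decide, by decide, by decide⟩, rfl⟩,
          by decide⟩
      | exact ⟨1, by omega, [0, 2],
          ⟨[0, 2], ⟨1, 2, 2, by decide, by decide, by decide, by decide, by decide⟩, rfl⟩,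
          by decide⟩
      | exact ⟨1, by omega, [1, 2],
          ⟨[1, 2], ⟨1, 2, 2, by decide, by decide, by decide, by decide, by decide⟩, rfl⟩,
          by decide⟩
  · -- triples
    obtain ⟨hab, hc2⟩ := List.isChain_cons_cons.1 hc
    obtain ⟨hbc, -⟩ := List.isChain_cons_cons.1 hc2
    fin_cases a <;> fin_cases b <;> fin_cases c <;>
      first
      | exact absurd hab (by decide)
      | exact absurd hbc (by decide)
      | exact ⟨0, by omega, _, rfl, by decide⟩
      | exact ⟨1, by omega, [0, 1],
          ⟨[0, 1], ⟨2, 3, 3, by decide, by decide, by decide, by decide, by decide⟩, rfl⟩,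
          by decide⟩
      | exact ⟨1, by omega, [0, 2],
          ⟨[0, 2], ⟨2, 3, 3, by decide, by decide, by decide, by decide, by decide⟩, rfl⟩,
          by decide⟩
      | exact ⟨1, by omega, [1, 2],
          ⟨[1, 2], ⟨2, 3, 3, by decide, by decide, by decide, by decide, by decide⟩, rfl⟩,
          by decide⟩
      | exact ⟨1, by omega, [0, 1],
          ⟨[0, 1], ⟨1, 2, 2, by decide, by decide, by decide, by decide, by decide⟩, rfl⟩,
          by decide⟩
      | exact ⟨1, by omega, [0, 2],
          ⟨[0, 2], ⟨1, 2, 2, by decide, by decide, by decide, by decide, by decide⟩, rfl⟩,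
          by decide⟩
      | exact ⟨1, by omega, [1, 2],
          ⟨[1, 2], ⟨1, 2, 2, by decide, by decide, by decide, by decide, by decide⟩, rfl⟩,
          by decide⟩
      | exact ⟨1, by omega, [0, 1, 2],
          ⟨[0, 1, 2], ⟨1, 2, 2, by decide, by decide, by decide, by decide, by decide⟩, rfl⟩,
          by decide⟩
      | exact ⟨1, by omega, [0, 1, 2],
          ⟨[0, 1, 2], ⟨2, 3, 3, by decide, by decide, by decide, by decide, by decide⟩, rfl⟩,
          by decide⟩
      | exact ⟨1, by omega, [0, 1, 2],
          ⟨[0, 1, 2], ⟨1, 2, 3, by decide, by decide, by decide, by decide, by decide⟩, rfl⟩,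
          by decide⟩
      | exact ⟨1, by omega, [0, 1, 2],
          ⟨[0, 1, 2], ⟨1, 3, 3, by decide, by decide, by decide, by decide, by decide⟩, rfl⟩,
          by decide⟩
      | exact ⟨2, by omega, [0, 1, 2],
          ⟨[2, 0, 1], ⟨1, 2, 2, by decide, by decide, by decide, by decide, by decide⟩,
            ⟨[0, 1, 2], ⟨1, 2, 3, by decide, by decide, by decide, by decide, by decide⟩,
              rfl⟩⟩,
          by decide⟩
  · exfalso; simp at h3; omega

/-- One step reducing the length by at least 1, for normalized strings of length ≥ 4. -/
lemma reduce1 (s : List (Fin 3)) (hc : s.Chain' (· ≠ ·)) (h4 : 4 ≤ s.length) :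
    ∃ t, PbiStep s t ∧ t.Chain' (· ≠ ·) ∧ t.length + 1 ≤ s.length := by
  rcases s with _ | ⟨p, _ | ⟨q, _ | ⟨r, _ | ⟨w, rest⟩⟩⟩⟩
  · simp at h4
  · simp at h4
  · simp at h4
  · simp at h4
  simp only [List.Chain', List.isChain_cons_cons] at hc
  obtain ⟨hpq, hqr, hrw, -⟩ := hc
  by_cases hrp : r = p
  · subst hrp
    refine ⟨normalizeStr ([w] ++ [q, r] ++ [r] ++ rest), ?_, normalize_chain _, ?_⟩
    · have key := PbiStep_decomp [r] [q, r] [w] rest (by simp) (by simp)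
      have e : ([r] : List (Fin 3)) ++ [q, r] ++ [w] ++ rest = r :: q :: r :: w :: rest := by
        simp
      rwa [e] at key
    · have e1 : ([w] : List (Fin 3)) ++ [q, r] ++ [r] ++ rest = [w, q] ++ r :: r :: rest := by
        simp
      rw [e1, normalize_collapse]
      have := normalize_length ([w, q] ++ r :: rest)
      simp only [List.length_append, List.length_cons, List.length_nil] at this ⊢
      omega
  · rcases fin3_or p q r w hpq hqr (fun h => hrp h) hrw with hw | hw
    · subst hw
      refine ⟨normalizeStr ([w] ++ [] ++ [w, q, r] ++ rest), ?_, normalize_chain _, ?_⟩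
      · have key := PbiStep_decomp [w, q, r] [] [w] rest (by simp) (by simp)
        have e : ([w] : List (Fin 3)) ++ [q, r] ++ [w] ++ rest = w :: q :: r :: w :: rest := by
          simp
        have e2 : ([w, q, r] : List (Fin 3)) ++ [] ++ [w] ++ rest = w :: q :: r :: w :: rest := by
          simp
        rwa [e2] at key
      · have e1 : ([w] : List (Fin 3)) ++ [] ++ [w, q, r] ++ rest
            = [] ++ w :: w :: (q :: r :: rest) := by simp
        rw [e1, normalize_collapse]
        have := normalize_length ([] ++ w :: (q :: r :: rest))
        simp only [List.length_append, List.length_cons, List.length_nil,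
          List.nil_append] at this ⊢
        omega
    · subst hw
      refine ⟨normalizeStr ([r] ++ [] ++ [p, w] ++ (w :: rest)), ?_, normalize_chain _, ?_⟩
      · have key := PbiStep_decomp [p, w] [] [r] (w :: rest) (by simp) (by simp)
        have e2 : ([p, w] : List (Fin 3)) ++ [] ++ [r] ++ (w :: rest)
            = p :: w :: r :: w :: rest := by simp
        rwa [e2] at key
      · have e1 : ([r] : List (Fin 3)) ++ [] ++ [p, w] ++ (w :: rest)
            = [r, p] ++ w :: w :: rest := by simp
        rw [e1, normalize_collapse]
        have := normalize_length ([r, p] ++ w :: rest)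
        simp only [List.length_append, List.length_cons, List.length_nil] at this ⊢
        omega

/-- One step reducing the length by at least 2, for normalized strings of length ≥ 6,
except for strings of the form `[a,b,c,b,c,a]`. -/
lemma reduce2 (s : List (Fin 3)) (hc : s.Chain' (· ≠ ·)) (h6 : 6 ≤ s.length) :
    (∃ t, PbiStep s t ∧ t.Chain' (· ≠ ·) ∧ t.length + 2 ≤ s.length) ∨
      ∃ a b c : Fin 3, a ≠ b ∧ c ≠ a ∧ c ≠ b ∧ s = [a, b, c, b, c, a] := by
  rcases s with _ | ⟨a, s⟩
  · simp at h6
  rcases s with _ | ⟨b, u⟩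
  · simp at h6
  by_cases ha : a ∈ u
  · obtain ⟨P, Q, rfl, haP⟩ := mem_first_split ha
    by_cases ha2 : a ∈ Q
    · -- a appears at least three times
      obtain ⟨P2, R, rfl, -⟩ := mem_first_split ha2
      left
      refine ⟨normalizeStr ((P2 ++ [a]) ++ [a] ++ (a :: b :: P) ++ R), ?_,
        normalize_chain _, ?_⟩
      · have key := PbiStep_decomp (a :: b :: P) [a] (P2 ++ [a]) R (by simp) (by simp)
        have e : (a :: b :: P) ++ [a] ++ (P2 ++ [a]) ++ R
            = a :: b :: (P ++ a :: (P2 ++ a :: R)) := by simp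
        rwa [e] at key
      · have e1 : (P2 ++ [a]) ++ [a] ++ (a :: b :: P) ++ R
            = P2 ++ a :: a :: (a :: (b :: (P ++ R))) := by simp
        rw [e1, normalize_collapse]
        have e2 : P2 ++ a :: (a :: (b :: (P ++ R))) = P2 ++ a :: a :: (b :: (P ++ R)) := rfl
        rw [e2, normalize_collapse]
        have := normalize_length (P2 ++ a :: (b :: (P ++ R)))
        simp only [List.length_append, List.length_cons] at this ⊢
        omega
    · rcases Q with _ | ⟨q1, Q'⟩
      · -- a appears exactly twice, second occurrence at the very end
        rcases P with _ | ⟨x1, _ | ⟨x2, _ | ⟨x3, P4⟩⟩⟩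
        · simp at h6
        · simp at h6
        · simp at h6
        simp only [List.Chain', List.cons_append, List.nil_append, List.isChain_cons_cons] at hc
        obtain ⟨hab, hb1, h12, h23, hc'⟩ := hc
        simp only [List.mem_cons, not_or] at haP
        obtain ⟨ha1, ha2', ha3, haP4⟩ := haP
        have hx2 : b = x2 := (fin3_eq_b a b x1 x2 hab (Ne.symm ha1) (Ne.symm hb1)
          (Ne.symm ha2') (Ne.symm h12)).symm
        subst hx2
        have hx3 : x1 = x3 := (fin3_eq_x a b x1 x3 hab (Ne.symm ha1) (Ne.symm hb1)
          (Ne.symm ha3) (Ne.symm h23)).symm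
        subst hx3
        rcases P4 with _ | ⟨x4, P5⟩
        · -- the exceptional string [a, b, x1, b, x1, a]
          right
          exact ⟨a, b, x1, hab, Ne.symm ha1, Ne.symm hb1, by simp⟩
        · simp only [List.cons_append, List.isChain_cons_cons] at hc'
          obtain ⟨h34, -⟩ := hc'
          simp only [List.mem_cons, not_or] at haP4
          obtain ⟨ha4, -⟩ := haP4
          have hx4 : b = x4 := (fin3_eq_b a b x1 x4 hab (Ne.symm ha1) (Ne.symm hb1)
            (Ne.symm ha4) (Ne.symm h34)).symm
          subst hx4
          left
          refine ⟨normalizeStr ([b, x1] ++ [x1] ++ [a, b] ++ (b :: (P5 ++ [a]))), ?_,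
            normalize_chain _, ?_⟩
          · have key := PbiStep_decomp [a, b] [x1] [b, x1] (b :: (P5 ++ [a]))
              (by simp) (by simp)
            have e : ([a, b] : List (Fin 3)) ++ [x1] ++ [b, x1] ++ (b :: (P5 ++ [a]))
                = a :: b :: (x1 :: b :: x1 :: b :: P5 ++ [a]) := by simp
            rwa [e] at key
          · have e1 : ([b, x1] : List (Fin 3)) ++ [x1] ++ [a, b] ++ (b :: (P5 ++ [a]))
                = [b] ++ x1 :: x1 :: (a :: b :: b :: (P5 ++ [a])) := by simp
            rw [e1, normalize_collapse]
            have e2 : ([b] : List (Fin 3)) ++ x1 :: (a :: b :: b :: (P5 ++ [a]))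
                = [b, x1, a] ++ b :: b :: (P5 ++ [a]) := by simp
            rw [e2, normalize_collapse]
            have := normalize_length ([b, x1, a] ++ b :: (P5 ++ [a]))
            simp only [List.length_append, List.length_cons, List.length_nil] at this ⊢
            omega
      · -- a appears exactly twice, not at the end
        simp only [List.mem_cons, not_or] at ha2
        obtain ⟨haq1, haQ'⟩ := ha2
        by_cases hq1b : q1 = b
        · subst hq1b
          left
          refine ⟨normalizeStr ([q1] ++ ((q1 :: P) ++ [a]) ++ [a] ++ Q'), ?_,
            normalize_chain _, ?_⟩
          · have key := PbiStep_decomp [a] ((q1 :: P) ++ [a]) [q1] Q' (by simp) (by simp)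
            have e : ([a] : List (Fin 3)) ++ ((q1 :: P) ++ [a]) ++ [q1] ++ Q'
                = a :: q1 :: (P ++ a :: q1 :: Q') := by simp
            rwa [e] at key
          · have e1 : ([q1] : List (Fin 3)) ++ ((q1 :: P) ++ [a]) ++ [a] ++ Q'
                = [] ++ q1 :: q1 :: (P ++ a :: a :: Q') := by simp
            rw [e1, normalize_collapse]
            have e2 : ([] : List (Fin 3)) ++ q1 :: (P ++ a :: a :: Q')
                = (q1 :: P) ++ a :: a :: Q' := by simp
            rw [e2, normalize_collapse]
            have := normalize_length ((q1 :: P) ++ a :: Q')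
            simp only [List.length_append, List.length_cons, List.length_nil] at this ⊢
            omega
        · rcases P with _ | ⟨p1, P1⟩
          · -- s = a :: b :: a :: q1 :: Q'
            rcases Q' with _ | ⟨w, Q''⟩
            · simp at h6
            simp only [List.Chain', List.nil_append, List.isChain_cons_cons] at hc
            obtain ⟨hab, hba, haq, hq1w, -⟩ := hc
            simp only [List.mem_cons, not_or] at haQ'
            obtain ⟨haw, -⟩ := haQ'
            have hw : b = w := (fin3_eq_b a b q1 w hab (Ne.symm haq1) hq1b
              (Ne.symm haw) (Ne.symm hq1w)).symm
            subst hw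
            left
            refine ⟨normalizeStr ([q1, b] ++ [b, a] ++ [a] ++ Q''), ?_,
              normalize_chain _, ?_⟩
            · have key := PbiStep_decomp [a] [b, a] [q1, b] Q'' (by simp) (by simp)
              have e : ([a] : List (Fin 3)) ++ [b, a] ++ [q1, b] ++ Q''
                  = a :: b :: ([] ++ a :: q1 :: b :: Q'') := by simp
              rwa [e] at key
            · have e1 : ([q1, b] : List (Fin 3)) ++ [b, a] ++ [a] ++ Q''
                  = [q1] ++ b :: b :: (a :: a :: Q'') := by simp
              rw [e1, normalize_collapse]
              have e2 : ([q1] : List (Fin 3)) ++ b :: (a :: a :: Q'')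
                  = [q1, b] ++ a :: a :: Q'' := by simp
              rw [e2, normalize_collapse]
              have := normalize_length ([q1, b] ++ a :: Q'')
              simp only [List.length_append, List.length_cons, List.length_nil] at this ⊢
              omega
          · -- s = a :: b :: p1 :: P1 ++ a :: q1 :: Q'
            simp only [List.Chain', List.cons_append, List.isChain_cons_cons] at hc
            obtain ⟨hab, hbp1, -⟩ := hc
            simp only [List.mem_cons, not_or] at haP
            obtain ⟨hap1, -⟩ := haP
            have hp1 : q1 = p1 := (fin3_eq_x a b q1 p1 hab (Ne.symm haq1) hq1b
              (Ne.symm hap1) (Ne.symm hbp1)).symm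
            subst hp1
            left
            refine ⟨normalizeStr ([q1] ++ ((q1 :: P1) ++ [a]) ++ [a, b] ++ Q'), ?_,
              normalize_chain _, ?_⟩
            · have key := PbiStep_decomp [a, b] ((q1 :: P1) ++ [a]) [q1] Q'
                (by simp) (by simp)
              have e : ([a, b] : List (Fin 3)) ++ ((q1 :: P1) ++ [a]) ++ [q1] ++ Q'
                  = a :: b :: ((q1 :: P1) ++ a :: q1 :: Q') := by simp
              rwa [e] at key
            · have e1 : ([q1] : List (Fin 3)) ++ ((q1 :: P1) ++ [a]) ++ [a, b] ++ Q'
                  = [] ++ q1 :: q1 :: (P1 ++ a :: a :: (b :: Q')) := by simp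
              rw [e1, normalize_collapse]
              have e2 : ([] : List (Fin 3)) ++ q1 :: (P1 ++ a :: a :: (b :: Q'))
                  = (q1 :: P1) ++ a :: a :: (b :: Q') := by simp
              rw [e2, normalize_collapse]
              have := normalize_length ((q1 :: P1) ++ a :: (b :: Q'))
              simp only [List.length_append, List.length_cons, List.length_nil] at this ⊢
              omega
  · -- a appears only once
    rcases u with _ | ⟨u1, _ | ⟨u2, _ | ⟨u3, _ | ⟨u4, rest⟩⟩⟩⟩
    · simp at h6
    · simp at h6
    · simp at h6
    · simp at h6
    simp only [List.Chain', List.isChain_cons_cons] at hc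
    obtain ⟨hab, hb1, h12, h23, h34, -⟩ := hc
    simp only [List.mem_cons, not_or] at ha
    obtain ⟨ha1, ha2', ha3, ha4, -⟩ := ha
    have hu2 : b = u2 := (fin3_eq_b a b u1 u2 hab (Ne.symm ha1) (Ne.symm hb1)
      (Ne.symm ha2') (Ne.symm h12)).symm
    subst hu2
    have hu3 : u1 = u3 := (fin3_eq_x a b u1 u3 hab (Ne.symm ha1) (Ne.symm hb1)
      (Ne.symm ha3) (Ne.symm h23)).symm
    subst hu3
    have hu4 : b = u4 := (fin3_eq_b a b u1 u4 hab (Ne.symm ha1) (Ne.symm hb1)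
      (Ne.symm ha4) (Ne.symm h34)).symm
    subst hu4
    left
    refine ⟨normalizeStr ([b, u1] ++ [u1] ++ [a, b] ++ (b :: rest)), ?_,
      normalize_chain _, ?_⟩
    · have key := PbiStep_decomp [a, b] [u1] [b, u1] (b :: rest) (by simp) (by simp)
      have e : ([a, b] : List (Fin 3)) ++ [u1] ++ [b, u1] ++ (b :: rest)
          = a :: b :: u1 :: b :: u1 :: b :: rest := by simp
      rwa [e] at key
    · have e1 : ([b, u1] : List (Fin 3)) ++ [u1] ++ [a, b] ++ (b :: rest)
          = [b] ++ u1 :: u1 :: (a :: b :: b :: rest) := by simp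
      rw [e1, normalize_collapse]
      have e2 : ([b] : List (Fin 3)) ++ u1 :: (a :: b :: b :: rest)
          = [b, u1, a] ++ b :: b :: rest := by simp
      rw [e2, normalize_collapse]
      have := normalize_length ([b, u1, a] ++ b :: rest)
      simp only [List.length_append, List.length_cons, List.length_nil] at this ⊢
      omega

lemma main_sort : ∀ (n : ℕ) (s : List (Fin 3)), s.length ≤ n → s.Chain' (· ≠ ·) →
    ∃ k, k ≤ bound s.length ∧ ∃ t, StepsTo PbiStep k s t ∧ t.Pairwise (· ≤ ·) := by
  intro n
  induction n with
  | zero =>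
    intro s hlen _
    have : s = [] := List.length_eq_zero_iff.mp (Nat.le_zero.mp hlen)
    subst this
    exact ⟨0, by omega, [], rfl, List.Pairwise.nil⟩
  | succ n ih =>
    intro s hlen hchain
    by_cases h3 : s.length ≤ 3
    · obtain ⟨k, hk, t, ht, hsort⟩ := base3 s hchain h3
      exact ⟨k, hk.trans (two_le_bound _), t, ht, hsort⟩
    · by_cases h5 : s.length ≤ 5
      · obtain ⟨t', hstep, hchain', hlen'⟩ := reduce1 s hchain (by omega)
        obtain ⟨k, hk, t, ht, hsort⟩ := ih t' (by omega) hchain'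
        refine ⟨k + 1, ?_, t, ⟨t', hstep, ht⟩, hsort⟩
        have hm := bound_mono (show t'.length ≤ s.length - 1 by omega)
        have hs := bound_step1 (show 4 ≤ s.length by omega) h5
        omega
      · rcases reduce2 s hchain (by omega) with ⟨t', hstep, hchain', hlen'⟩ |
          ⟨a, b, c, hab, hca, hcb, hs⟩
        · obtain ⟨k, hk, t, ht, hsort⟩ := ih t' (by omega) hchain'
          refine ⟨k + 1, ?_, t, ⟨t', hstep, ht⟩, hsort⟩
          have hm := bound_mono (show t'.length ≤ s.length - 2 by omega)
          have hs := bound_step2 (show 6 ≤ s.length by omega)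
          omega
        · subst hs
          fin_cases a <;> fin_cases b <;> fin_cases c <;>
            first
            | exact absurd hab (by decide)
            | exact absurd hca (by decide)
            | exact absurd hcb (by decide)
            | exact ⟨2, by decide, [0, 1, 2],
                ⟨[2, 0, 1, 2, 0], ⟨2, 3, 3, by decide, by decide, by decide, by decide,
                    by decide⟩,
                  ⟨[0, 1, 2], ⟨1, 5, 5, by decide, by decide, by decide, by decide,
                      by decide⟩, rfl⟩⟩,
                by decide⟩
            | exact ⟨2, by decide, [0, 1, 2],
                ⟨[1, 2, 0, 1, 0], ⟨1, 3, 4, by decide, by decide, by decide, by decide,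
                    by decide⟩,
                  ⟨[0, 1, 2], ⟨2, 5, 5, by decide, by decide, by decide, by decide,
                      by decide⟩, rfl⟩⟩,
                by decide⟩
            | exact ⟨3, by decide, [0, 1, 2],
                ⟨[0, 1, 2, 0, 2, 1], ⟨1, 2, 2, by decide, by decide, by decide, by decide,
                    by decide⟩,
                  ⟨[2, 1, 2, 0, 1], ⟨1, 5, 5, by decide, by decide, by decide, by decide,
                      by decide⟩,
                    ⟨[0, 1, 2], ⟨1, 4, 5, by decide, by decide, by decide, by decide,
                        by decide⟩, rfl⟩⟩⟩,
                by decide⟩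
            | exact ⟨2, by decide, [0, 1, 2],
                ⟨[2, 1, 2, 0, 1], ⟨3, 4, 4, by decide, by decide, by decide, by decide,
                    by decide⟩,
                  ⟨[0, 1, 2], ⟨1, 4, 5, by decide, by decide, by decide, by decide,
                      by decide⟩, rfl⟩⟩,
                by decide⟩
            | exact ⟨2, by decide, [0, 1, 2],
                ⟨[0, 1, 0, 1, 2], ⟨1, 2, 5, by decide, by decide, by decide, by decide,
                    by decide⟩,
                  ⟨[0, 1, 2], ⟨2, 3, 3, by decide, by decide, by decide, by decide,
                      by decide⟩, rfl⟩⟩,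
                by decide⟩
            | exact ⟨2, by decide, [0, 1, 2],
                ⟨[1, 2, 0, 1, 0, 2], ⟨1, 2, 2, by decide, by decide, by decide, by decide,
                    by decide⟩,
                  ⟨[0, 1, 2], ⟨2, 5, 5, by decide, by decide, by decide, by decide,
                      by decide⟩, rfl⟩⟩,
                by decide⟩

/-- For a fully normalized ternary string s of length n, the
sorting distance under prefix block-interchanges is at most ⌈(n−2)/2⌉ + 2. -/
theorem stmt_17 (s : List (Fin 3)) (hnorm : s.Chain' (· ≠ ·))
    (h0 : 0 ∈ s) (h1 : 1 ∈ s) (h2 : 2 ∈ s) :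
    ∃ k, k ≤ (s.length - 2 + 1) / 2 + 2 ∧
      ∃ t, StepsTo PbiStep k s t ∧ t.Pairwise (· ≤ ·) := by
  obtain ⟨k, hk, t, ht, hsort⟩ := main_sort s.length s le_rfl hnorm
  refine ⟨k, ?_, t, ht, hsort⟩
  have : bound s.length ≤ (s.length - 2 + 1) / 2 + 2 := by
    unfold bound; split <;> omega
  omega
end
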